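/- With the ratio setup, let μ_i > 0 for i = 1, …, n and define the logarithmic FP objective g_o(x) = ∑_{i=1}^n μ_i log(1 + M_i(x)). Fix x such that every G_i(x) is positive definite; set t_i = M_i(x), F_i(x) = A_i x_i x_i^H A_i^H + G_i(x), ŷ_i = F_i(x)^{-1} A_i x_i, and D̂_i = μ_i(1 + t_i)·A_i^H ŷ_i ŷ_i^H A_i + ∑_{j=1}^n μ_j(1 + t_j)·B_{ji}^H ŷ_j ŷ_j^H B_{ji}. Then g_o is differentiable over ℝ at x and its ℝ-Fréchet derivative in any direction h = (h_1, …, h_n) ∈ (ℂ^d)^n equals D g_o(x)[h] = 2·∑_{i=1}^n Re{(μ_i(1 + t_i)·A_i^H ŷ_i − D̂_i x_i)^H h_i}. -/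

import Mathlib

open Matrix ComplexOrder

/-- `Gᵢ(x) = ∑ⱼ Bᵢⱼ xⱼ xⱼᴴ Bᵢⱼᴴ`. -/
noncomputable def Gmat {n d ℓ : ℕ}
    (B : Fin n → Fin n → Matrix (Fin ℓ) (Fin d) ℂ)
    (x : Fin n → Fin d → ℂ) (i : Fin n) : Matrix (Fin ℓ) (Fin ℓ) ℂ :=
  ∑ j, B i j * vecMulVec (x j) (star (x j)) * (B i j)ᴴ

/-- The ratio `Mᵢ(x) = (Aᵢ xᵢ)ᴴ Gᵢ(x)⁻¹ (Aᵢ xᵢ)` (a real number). -/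
noncomputable def Mratio {n d ℓ : ℕ}
    (A : Fin n → Matrix (Fin ℓ) (Fin d) ℂ)
    (B : Fin n → Fin n → Matrix (Fin ℓ) (Fin d) ℂ)
    (x : Fin n → Fin d → ℂ) (i : Fin n) : ℝ :=
  (star (A i *ᵥ x i) ⬝ᵥ (Gmat B x i)⁻¹ *ᵥ (A i *ᵥ x i)).re

/-- The logarithmic FP objective `g_o(x) = ∑ᵢ μᵢ log(1 + Mᵢ(x))`. -/
noncomputable def go {n d ℓ : ℕ} (μ : Fin n → ℝ)
    (A : Fin n → Matrix (Fin ℓ) (Fin d) ℂ)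
    (B : Fin n → Fin n → Matrix (Fin ℓ) (Fin d) ℂ)
    (x : Fin n → Fin d → ℂ) : ℝ :=
  ∑ i, μ i * Real.log (1 + Mratio A B x i)

namespace Cor1

attribute [local instance]
  Matrix.linftyOpNormedAddCommGroup Matrix.linftyOpNormedRing
  Matrix.linftyOpNormedSpace Matrix.linftyOpNormedAlgebra

variable {n d ℓ : ℕ}

/-- `x ↦ A *ᵥ x i` as an `ℝ`-CLM. -/
noncomputable def mvCLM (A : Matrix (Fin ℓ) (Fin d) ℂ) (i : Fin n) :
    (Fin n → Fin d → ℂ) →L[ℝ] (Fin ℓ → ℂ) :=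
  LinearMap.toContinuousLinearMap <|
    ((Matrix.mulVecLin A).restrictScalars ℝ) ∘ₗ (LinearMap.proj i)

@[simp] lemma mvCLM_apply (A : Matrix (Fin ℓ) (Fin d) ℂ) (i : Fin n)
    (x : Fin n → Fin d → ℂ) : mvCLM A i x = A *ᵥ x i := rfl

/-- entrywise star as an `ℝ`-CLM. -/
noncomputable def starCLM : (Fin ℓ → ℂ) →L[ℝ] (Fin ℓ → ℂ) :=
  LinearMap.toContinuousLinearMap
    { toFun := star
      map_add' := star_add
      map_smul' := fun r v => by
        funext a; simp [Complex.real_smul, _root_.map_mul] }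

@[simp] lemma starCLM_apply (v : Fin ℓ → ℂ) : (starCLM v) = star v := rfl

/-- dot product as an `ℝ`-bilinear CLM. -/
noncomputable def dpCLM : (Fin ℓ → ℂ) →L[ℝ] (Fin ℓ → ℂ) →L[ℝ] ℂ :=
  LinearMap.toContinuousLinearMap <|
    (LinearMap.toContinuousLinearMap.toLinearMap) ∘ₗ
      (LinearMap.mk₂ ℝ (fun u v => u ⬝ᵥ v)
        (fun u u' v => add_dotProduct u u' v)
        (fun r u v => smul_dotProduct r u v)
        (fun u v v' => dotProduct_add u v v')
        (fun r u v => dotProduct_smul r u v))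

@[simp] lemma dpCLM_apply (u v : Fin ℓ → ℂ) : dpCLM u v = u ⬝ᵥ v := rfl

/-- matrix-vector multiplication as an `ℝ`-bilinear CLM. -/
noncomputable def mvbCLM : Matrix (Fin ℓ) (Fin ℓ) ℂ →L[ℝ] (Fin ℓ → ℂ) →L[ℝ] (Fin ℓ → ℂ) :=
  LinearMap.toContinuousLinearMap <|
    (LinearMap.toContinuousLinearMap.toLinearMap) ∘ₗ
      (LinearMap.mk₂ ℝ (fun M v => M *ᵥ v)
        (fun M M' v => add_mulVec M M' v)
        (fun r M v => by ext a; simp [Matrix.smul_mulVec])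
        (fun M v v' => mulVec_add M v v')
        (fun r M v => mulVec_smul M r v))

@[simp] lemma mvbCLM_apply (M : Matrix (Fin ℓ) (Fin ℓ) ℂ) (v : Fin ℓ → ℂ) :
    mvbCLM M v = M *ᵥ v := rfl

/-- `(u, v) ↦ ∑ j, B i j * vecMulVec (u j) (star (v j)) * (B i j)ᴴ` as a bilinear map. -/
noncomputable def betaLM (Bi : Fin n → Matrix (Fin ℓ) (Fin d) ℂ) :
    (Fin n → Fin d → ℂ) →ₗ[ℝ] (Fin n → Fin d → ℂ) →ₗ[ℝ] Matrix (Fin ℓ) (Fin ℓ) ℂ :=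
  LinearMap.mk₂ ℝ (fun u v => ∑ j, Bi j * vecMulVec (u j) (star (v j)) * (Bi j)ᴴ)
    (fun u u' v => by
      rw [← Finset.sum_add_distrib]
      refine Finset.sum_congr rfl fun j _ => ?_
      ext a b
      simp [Matrix.mul_apply, vecMulVec_apply, Finset.sum_add_distrib, add_mul, mul_add])
    (fun r u v => by
      rw [Finset.smul_sum]
      refine Finset.sum_congr rfl fun j _ => ?_
      ext a b
      simp only [Matrix.mul_apply, vecMulVec_apply, Matrix.smul_apply, Pi.smul_apply,
        Complex.real_smul, Finset.mul_sum, Finset.sum_mul]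
      refine Finset.sum_congr rfl fun p _ => Finset.sum_congr rfl fun q _ => ?_
      ring)
    (fun u v v' => by
      rw [← Finset.sum_add_distrib]
      refine Finset.sum_congr rfl fun j _ => ?_
      ext a b
      simp [Matrix.mul_apply, vecMulVec_apply, Finset.sum_add_distrib, add_mul, mul_add])
    (fun r u v => by
      rw [Finset.smul_sum]
      refine Finset.sum_congr rfl fun j _ => ?_
      ext a b
      simp only [Matrix.mul_apply, vecMulVec_apply, Matrix.smul_apply, Pi.smul_apply,
        Complex.real_smul, Finset.mul_sum, Finset.sum_mul, Pi.star_apply, star_smul, star_trivial,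
        RCLike.star_def, Complex.conj_ofReal]
      refine Finset.sum_congr rfl fun p _ => Finset.sum_congr rfl fun q _ => ?_
      ring)

noncomputable def betaCLM (Bi : Fin n → Matrix (Fin ℓ) (Fin d) ℂ) :
    (Fin n → Fin d → ℂ) →L[ℝ] (Fin n → Fin d → ℂ) →L[ℝ] Matrix (Fin ℓ) (Fin ℓ) ℂ :=
  LinearMap.toContinuousLinearMap <|
    (LinearMap.toContinuousLinearMap.toLinearMap) ∘ₗ (betaLM Bi)

@[simp] lemma betaCLM_apply (Bi : Fin n → Matrix (Fin ℓ) (Fin d) ℂ)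
    (u v : Fin n → Fin d → ℂ) :
    betaCLM Bi u v = ∑ j, Bi j * vecMulVec (u j) (star (v j)) * (Bi j)ᴴ := rfl

lemma hasFDerivAt_G (B : Fin n → Fin n → Matrix (Fin ℓ) (Fin d) ℂ)
    (x : Fin n → Fin d → ℂ) (i : Fin n) :
    HasFDerivAt (fun y => Gmat B y i)
      ((betaCLM (B i)).isBoundedBilinearMap.deriv (x, x) ∘L
        ((ContinuousLinearMap.id ℝ _).prod (ContinuousLinearMap.id ℝ _))) x := by
  have hid : HasFDerivAt (fun y : Fin n → Fin d → ℂ => (y, y))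
      ((ContinuousLinearMap.id ℝ _).prod (ContinuousLinearMap.id ℝ _)) x :=
    (hasFDerivAt_id x).prodMk (hasFDerivAt_id x)
  have h := ((betaCLM (B i)).isBoundedBilinearMap.hasFDerivAt (x, x)).comp
    (f := fun y : Fin n → Fin d → ℂ => (y, y)) x hid
  exact h.congr_of_eventuallyEq (Filter.Eventually.of_forall fun y => rfl)


/-- The derivative CLM of `y ↦ Gmat B y i` at `x`. -/
noncomputable def DG (B : Fin n → Fin n → Matrix (Fin ℓ) (Fin d) ℂ)
    (x : Fin n → Fin d → ℂ) (i : Fin n) :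
    (Fin n → Fin d → ℂ) →L[ℝ] Matrix (Fin ℓ) (Fin ℓ) ℂ :=
  (betaCLM (B i)).isBoundedBilinearMap.deriv (x, x) ∘L
    ((ContinuousLinearMap.id ℝ _).prod (ContinuousLinearMap.id ℝ _))

lemma DG_apply (B : Fin n → Fin n → Matrix (Fin ℓ) (Fin d) ℂ)
    (x : Fin n → Fin d → ℂ) (i : Fin n) (h : Fin n → Fin d → ℂ) :
    DG B x i h = (∑ j, B i j * vecMulVec (x j) (star (h j)) * (B i j)ᴴ)
      + ∑ j, B i j * vecMulVec (h j) (star (x j)) * (B i j)ᴴ := rfl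

lemma hasFDerivAt_G' (B : Fin n → Fin n → Matrix (Fin ℓ) (Fin d) ℂ)
    (x : Fin n → Fin d → ℂ) (i : Fin n) :
    HasFDerivAt (fun y => Gmat B y i) (DG B x i) x := hasFDerivAt_G B x i

lemma hasFDerivAt_invG (B : Fin n → Fin n → Matrix (Fin ℓ) (Fin d) ℂ)
    (x : Fin n → Fin d → ℂ) (i : Fin n) (hGi : (Gmat B x i).PosDef) :
    HasFDerivAt (fun y => (Gmat B y i)⁻¹)
      ((-(ContinuousLinearMap.mulLeftRight ℝ (Matrix (Fin ℓ) (Fin ℓ) ℂ)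
          (Gmat B x i)⁻¹ (Gmat B x i)⁻¹)) ∘L DG B x i) x := by
  have hU := hGi.isUnit
  have h1 := hasFDerivAt_ringInverse (𝕜 := ℝ) hU.unit
  have e1 : ((hU.unit⁻¹ : (Matrix (Fin ℓ) (Fin ℓ) ℂ)ˣ) : Matrix (Fin ℓ) (Fin ℓ) ℂ)
      = (Gmat B x i)⁻¹ := by
    rw [Matrix.coe_units_inv, hU.unit_spec]
  rw [e1, hU.unit_spec] at h1
  have h2 := h1.comp (f := fun y => Gmat B y i) x (hasFDerivAt_G' B x i)
  exact h2.congr_of_eventuallyEq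
    (Filter.Eventually.of_forall fun y => Matrix.nonsing_inv_eq_ringInverse _)


/-- Derivative CLM of `y ↦ (Gmat B y i)⁻¹ *ᵥ (A i *ᵥ y i)` at `x`. -/
noncomputable def Dw (A : Fin n → Matrix (Fin ℓ) (Fin d) ℂ)
    (B : Fin n → Fin n → Matrix (Fin ℓ) (Fin d) ℂ)
    (x : Fin n → Fin d → ℂ) (i : Fin n) :
    (Fin n → Fin d → ℂ) →L[ℝ] (Fin ℓ → ℂ) :=
  (mvbCLM.isBoundedBilinearMap.deriv ((Gmat B x i)⁻¹, A i *ᵥ x i)) ∘L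
    ((((-(ContinuousLinearMap.mulLeftRight ℝ (Matrix (Fin ℓ) (Fin ℓ) ℂ)
          (Gmat B x i)⁻¹ (Gmat B x i)⁻¹)) ∘L DG B x i)).prod (mvCLM (A i) i))

lemma Dw_apply (A : Fin n → Matrix (Fin ℓ) (Fin d) ℂ)
    (B : Fin n → Fin n → Matrix (Fin ℓ) (Fin d) ℂ)
    (x : Fin n → Fin d → ℂ) (i : Fin n) (h : Fin n → Fin d → ℂ) :
    Dw A B x i h = (Gmat B x i)⁻¹ *ᵥ (A i *ᵥ h i)
      + (-((Gmat B x i)⁻¹ * (DG B x i h) * (Gmat B x i)⁻¹)) *ᵥ (A i *ᵥ x i) := rfl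

lemma hasFDerivAt_w (A : Fin n → Matrix (Fin ℓ) (Fin d) ℂ)
    (B : Fin n → Fin n → Matrix (Fin ℓ) (Fin d) ℂ)
    (x : Fin n → Fin d → ℂ) (i : Fin n) (hGi : (Gmat B x i).PosDef) :
    HasFDerivAt (fun y => (Gmat B y i)⁻¹ *ᵥ (A i *ᵥ y i)) (Dw A B x i) x := by
  have hinner : HasFDerivAt (fun y => ((Gmat B y i)⁻¹, A i *ᵥ y i))
      ((((-(ContinuousLinearMap.mulLeftRight ℝ (Matrix (Fin ℓ) (Fin ℓ) ℂ)
          (Gmat B x i)⁻¹ (Gmat B x i)⁻¹)) ∘L DG B x i)).prod (mvCLM (A i) i)) x :=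
    (hasFDerivAt_invG B x i hGi).prodMk ((mvCLM (A i) i).hasFDerivAt)
  have h := (mvbCLM.isBoundedBilinearMap.hasFDerivAt ((Gmat B x i)⁻¹, A i *ᵥ x i)).comp
    (f := fun y => ((Gmat B y i)⁻¹, A i *ᵥ y i)) x hinner
  exact h.congr_of_eventuallyEq (Filter.Eventually.of_forall fun y => rfl)

/-- Derivative CLM of the complex scalar `y ↦ star (A i *ᵥ y i) ⬝ᵥ ((Gmat B y i)⁻¹ *ᵥ (A i *ᵥ y i))`. -/
noncomputable def Ds (A : Fin n → Matrix (Fin ℓ) (Fin d) ℂ)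
    (B : Fin n → Fin n → Matrix (Fin ℓ) (Fin d) ℂ)
    (x : Fin n → Fin d → ℂ) (i : Fin n) :
    (Fin n → Fin d → ℂ) →L[ℝ] ℂ :=
  (dpCLM.isBoundedBilinearMap.deriv
      (star (A i *ᵥ x i), (Gmat B x i)⁻¹ *ᵥ (A i *ᵥ x i))) ∘L
    ((starCLM ∘L mvCLM (A i) i).prod (Dw A B x i))

lemma Ds_apply (A : Fin n → Matrix (Fin ℓ) (Fin d) ℂ)
    (B : Fin n → Fin n → Matrix (Fin ℓ) (Fin d) ℂ)
    (x : Fin n → Fin d → ℂ) (i : Fin n) (h : Fin n → Fin d → ℂ) :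
    Ds A B x i h = star (A i *ᵥ x i) ⬝ᵥ ((Gmat B x i)⁻¹ *ᵥ (A i *ᵥ h i)
        + (-((Gmat B x i)⁻¹ * (DG B x i h) * (Gmat B x i)⁻¹)) *ᵥ (A i *ᵥ x i))
      + star (A i *ᵥ h i) ⬝ᵥ ((Gmat B x i)⁻¹ *ᵥ (A i *ᵥ x i)) := rfl

set_option maxHeartbeats 1000000 in
lemma hasFDerivAt_s (A : Fin n → Matrix (Fin ℓ) (Fin d) ℂ)
    (B : Fin n → Fin n → Matrix (Fin ℓ) (Fin d) ℂ)
    (x : Fin n → Fin d → ℂ) (i : Fin n) (hGi : (Gmat B x i).PosDef) :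
    HasFDerivAt (fun y => star (A i *ᵥ y i) ⬝ᵥ ((Gmat B y i)⁻¹ *ᵥ (A i *ᵥ y i)))
      (Ds A B x i) x := by
  have hc : HasFDerivAt (fun y : Fin n → Fin d → ℂ => A i *ᵥ y i) (mvCLM (A i) i) x :=
    (mvCLM (A i) i).hasFDerivAt
  have hstc : HasFDerivAt (fun y => star (A i *ᵥ y i)) (starCLM ∘L mvCLM (A i) i) x := by
    have := starCLM.hasFDerivAt.comp (f := fun y : Fin n → Fin d → ℂ => A i *ᵥ y i) x hc
    exact this.congr_of_eventuallyEq (Filter.Eventually.of_forall fun y => rfl)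
  have hinner := hstc.prodMk (hasFDerivAt_w A B x i hGi)
  have h := (dpCLM.isBoundedBilinearMap.hasFDerivAt
      (star (A i *ᵥ x i), (Gmat B x i)⁻¹ *ᵥ (A i *ᵥ x i))).comp
    (f := fun y => (star (A i *ᵥ y i), (Gmat B y i)⁻¹ *ᵥ (A i *ᵥ y i))) x hinner
  exact h.congr_of_eventuallyEq (Filter.Eventually.of_forall fun y => rfl)


lemma Mratio_nonneg (A : Fin n → Matrix (Fin ℓ) (Fin d) ℂ)
    (B : Fin n → Fin n → Matrix (Fin ℓ) (Fin d) ℂ)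
    (x : Fin n → Fin d → ℂ) (i : Fin n) (hGi : (Gmat B x i).PosDef) :
    0 ≤ Mratio A B x i := by
  have h := (hGi.inv).posSemidef.re_dotProduct_nonneg (A i *ᵥ x i)
  simpa [Mratio, RCLike.re_to_complex] using h

lemma hasFDerivAt_M (A : Fin n → Matrix (Fin ℓ) (Fin d) ℂ)
    (B : Fin n → Fin n → Matrix (Fin ℓ) (Fin d) ℂ)
    (x : Fin n → Fin d → ℂ) (i : Fin n) (hGi : (Gmat B x i).PosDef) :
    HasFDerivAt (fun y => Mratio A B y i) (Complex.reCLM ∘L Ds A B x i) x := by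
  have h := Complex.reCLM.hasFDerivAt.comp x (hasFDerivAt_s A B x i hGi)
  exact h.congr_of_eventuallyEq (Filter.Eventually.of_forall fun y => rfl)

lemma hasFDerivAt_go (μ : Fin n → ℝ) (A : Fin n → Matrix (Fin ℓ) (Fin d) ℂ)
    (B : Fin n → Fin n → Matrix (Fin ℓ) (Fin d) ℂ)
    (x : Fin n → Fin d → ℂ) (hG : ∀ i, (Gmat B x i).PosDef) :
    HasFDerivAt (go μ A B)
      (∑ i, (μ i * (1 + Mratio A B x i)⁻¹) • (Complex.reCLM ∘L Ds A B x i)) x := by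
  have key : ∀ i, HasFDerivAt (fun y => μ i * Real.log (1 + Mratio A B y i))
      ((μ i * (1 + Mratio A B x i)⁻¹) • (Complex.reCLM ∘L Ds A B x i)) x := by
    intro i
    have hpos : 0 < 1 + Mratio A B x i := by
      have := Mratio_nonneg A B x i (hG i); linarith
    have hf : HasDerivAt (fun r : ℝ => 1 + r) 1 (Mratio A B x i) := by
      simpa using (hasDerivAt_id (Mratio A B x i)).const_add 1
    have hlog : HasDerivAt Real.log (1 + Mratio A B x i)⁻¹ (1 + Mratio A B x i) :=
      Real.hasDerivAt_log hpos.ne'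
    have hcomp := hlog.comp (Mratio A B x i) hf
    have h2 := (HasDerivAt.const_mul (μ i) hcomp).comp_hasFDerivAt x
      (hasFDerivAt_M A B x i (hG i))
    rw [mul_one] at h2
    exact h2.congr_of_eventuallyEq (Filter.Eventually.of_forall fun y => rfl)
  have h := HasFDerivAt.fun_sum (fun i (_ : i ∈ Finset.univ) => key i)
  exact h.congr_of_eventuallyEq (Filter.Eventually.of_forall fun y => rfl)


/-! ### pointwise algebra helpers -/

lemma vecMulVec_mulVec' {a b : ℕ} (u : Fin a → ℂ) (v z : Fin b → ℂ) :
    vecMulVec u v *ᵥ z = (v ⬝ᵥ z) • u := by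
  ext i
  simp only [Matrix.mulVec, dotProduct, vecMulVec_apply, Pi.smul_apply, smul_eq_mul,
    Finset.sum_mul]
  exact Finset.sum_congr rfl fun j _ => by ring

lemma sum_mulVec' {a b : ℕ} {κ : Type*} (s : Finset κ) (M : κ → Matrix (Fin a) (Fin b) ℂ)
    (v : Fin b → ℂ) : (∑ j ∈ s, M j) *ᵥ v = ∑ j ∈ s, M j *ᵥ v := by
  ext i
  simp only [Matrix.mulVec, dotProduct, Matrix.sum_apply, Finset.sum_apply,
    Finset.sum_mul]
  exact Finset.sum_comm

lemma triple_mulVec {a b : ℕ} (Bm : Matrix (Fin a) (Fin b) ℂ) (u v : Fin b → ℂ)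
    (z : Fin a → ℂ) :
    (Bm * vecMulVec u v * Bmᴴ) *ᵥ z = (v ⬝ᵥ (Bmᴴ *ᵥ z)) • (Bm *ᵥ u) := by
  rw [← Matrix.mulVec_mulVec, ← Matrix.mulVec_mulVec, vecMulVec_mulVec',
    Matrix.mulVec_smul]

section Point

variable (A : Fin n → Matrix (Fin ℓ) (Fin d) ℂ)
  (B : Fin n → Fin n → Matrix (Fin ℓ) (Fin d) ℂ)
  (x : Fin n → Fin d → ℂ)

/-- `w i = Gᵢ(x)⁻¹ (Aᵢ xᵢ)`. -/
noncomputable def wvec (i : Fin n) : Fin ℓ → ℂ :=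
  (Gmat B x i)⁻¹ *ᵥ (A i *ᵥ x i)

variable {A B x}

lemma shift_g (i : Fin n) (hGi : (Gmat B x i).PosDef) (z : Fin ℓ → ℂ) :
    star (A i *ᵥ x i) ⬝ᵥ ((Gmat B x i)⁻¹ *ᵥ z) = star (wvec A B x i) ⬝ᵥ z := by
  have hw : star (wvec A B x i) = star (A i *ᵥ x i) ᵥ* (Gmat B x i)⁻¹ := by
    rw [wvec, Matrix.star_mulVec, hGi.inv.isHermitian.eq]
  rw [Matrix.dotProduct_mulVec, ← hw]

lemma s_eq_t (i : Fin n) (hGi : (Gmat B x i).PosDef) :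
    star (A i *ᵥ x i) ⬝ᵥ (wvec A B x i) = ((Mratio A B x i : ℝ) : ℂ) := by
  have h1 : star (A i *ᵥ x i) ⬝ᵥ (wvec A B x i) = star (wvec A B x i) ⬝ᵥ (A i *ᵥ x i) :=
    shift_g i hGi _
  have h2 : star (star (A i *ᵥ x i) ⬝ᵥ (wvec A B x i))
      = star (A i *ᵥ x i) ⬝ᵥ (wvec A B x i) := by
    conv_lhs => rw [Matrix.star_dotProduct]
    rw [star_star, ← h1]
  have h3 : ((star (A i *ᵥ x i) ⬝ᵥ wvec A B x i).re : ℂ)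
      = star (A i *ᵥ x i) ⬝ᵥ wvec A B x i :=
    Complex.conj_eq_iff_re.mp h2
  rw [show Mratio A B x i = (star (A i *ᵥ x i) ⬝ᵥ wvec A B x i).re from rfl]
  exact h3.symm

lemma wshift (i : Fin n) (hGi : (Gmat B x i).PosDef) :
    star (wvec A B x i) ⬝ᵥ (A i *ᵥ x i) = ((Mratio A B x i : ℝ) : ℂ) := by
  exact (shift_g i hGi _).symm.trans (s_eq_t i hGi)

lemma dotProduct_sum' {a : ℕ} {κ : Type*} (s : Finset κ) (u : Fin a → ℂ)
    (f : κ → Fin a → ℂ) : u ⬝ᵥ (∑ j ∈ s, f j) = ∑ j ∈ s, u ⬝ᵥ f j := by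
  simp only [dotProduct, Finset.sum_apply, Finset.mul_sum]
  exact Finset.sum_comm

/-- `qᵢⱼ = wᵢᴴ Bᵢⱼ xⱼ`. -/
noncomputable def qsc (A : Fin n → Matrix (Fin ℓ) (Fin d) ℂ)
    (B : Fin n → Fin n → Matrix (Fin ℓ) (Fin d) ℂ) (x : Fin n → Fin d → ℂ)
    (i j : Fin n) : ℂ :=
  star (wvec A B x i) ⬝ᵥ (B i j *ᵥ x j)

/-- `pᵢⱼ = (Bᵢⱼᴴ wᵢ)ᴴ hⱼ`. -/
noncomputable def psc (A : Fin n → Matrix (Fin ℓ) (Fin d) ℂ)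
    (B : Fin n → Fin n → Matrix (Fin ℓ) (Fin d) ℂ) (x h : Fin n → Fin d → ℂ)
    (i j : Fin n) : ℂ :=
  star ((B i j)ᴴ *ᵥ wvec A B x i) ⬝ᵥ h j

/-- `aᵢ = (Aᵢᴴ wᵢ)ᴴ hᵢ`. -/
noncomputable def asc (A : Fin n → Matrix (Fin ℓ) (Fin d) ℂ)
    (B : Fin n → Fin n → Matrix (Fin ℓ) (Fin d) ℂ) (x h : Fin n → Fin d → ℂ)
    (i : Fin n) : ℂ :=
  star ((A i)ᴴ *ᵥ wvec A B x i) ⬝ᵥ h i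

lemma star_AHw (i : Fin n) : star ((A i)ᴴ *ᵥ wvec A B x i) = star (wvec A B x i) ᵥ* A i := by
  rw [Matrix.star_mulVec, Matrix.conjTranspose_conjTranspose]

lemma star_BHw (i j : Fin n) :
    star ((B i j)ᴴ *ᵥ wvec A B x i) = star (wvec A B x i) ᵥ* B i j := by
  rw [Matrix.star_mulVec, Matrix.conjTranspose_conjTranspose]

lemma Ds_eq (i : Fin n) (hGi : (Gmat B x i).PosDef) (h : Fin n → Fin d → ℂ) :
    Ds A B x i h = asc A B x h i
      + (-(∑ j, star (psc A B x h i j) * qsc A B x i j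
          + ∑ j, star (qsc A B x i j) * psc A B x h i j))
      + star (asc A B x h i) := by
  rw [Ds_apply, dotProduct_add]
  have hT1 : star (A i *ᵥ x i) ⬝ᵥ ((Gmat B x i)⁻¹ *ᵥ (A i *ᵥ h i)) = asc A B x h i := by
    rw [shift_g i hGi, Matrix.dotProduct_mulVec, asc, star_AHw]
  have hT3 : star (A i *ᵥ h i) ⬝ᵥ ((Gmat B x i)⁻¹ *ᵥ (A i *ᵥ x i)) = star (asc A B x h i) := by
    rw [Matrix.star_dotProduct]
    congr 1
    rw [Matrix.dotProduct_mulVec, asc, star_AHw]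
    rfl
  have hKw : (DG B x i h) *ᵥ (wvec A B x i) =
      (∑ j, (star (psc A B x h i j) • (B i j *ᵥ x j)))
      + ∑ j, (star (qsc A B x i j) • (B i j *ᵥ h j)) := by
    rw [DG_apply, Matrix.add_mulVec, sum_mulVec', sum_mulVec']
    congr 1
    · refine Finset.sum_congr rfl fun j _ => ?_
      rw [triple_mulVec]
      congr 1
      rw [Matrix.star_dotProduct]
      rfl
    · refine Finset.sum_congr rfl fun j _ => ?_
      rw [triple_mulVec]
      congr 1
      rw [Matrix.star_dotProduct, star_BHw, ← Matrix.dotProduct_mulVec]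
      rfl
  have hT2 : star (A i *ᵥ x i) ⬝ᵥ
      ((-((Gmat B x i)⁻¹ * (DG B x i h) * (Gmat B x i)⁻¹)) *ᵥ (A i *ᵥ x i))
      = -(∑ j, star (psc A B x h i j) * qsc A B x i j
          + ∑ j, star (qsc A B x i j) * psc A B x h i j) := by
    rw [Matrix.neg_mulVec, dotProduct_neg]
    congr 1
    rw [← Matrix.mulVec_mulVec, ← Matrix.mulVec_mulVec, shift_g i hGi,
      show (Gmat B x i)⁻¹ *ᵥ (A i *ᵥ x i) = wvec A B x i from rfl, hKw,
      dotProduct_add, dotProduct_sum', dotProduct_sum']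
    congr 1
    · refine Finset.sum_congr rfl fun j _ => ?_
      rw [dotProduct_smul, smul_eq_mul, qsc]
    · refine Finset.sum_congr rfl fun j _ => ?_
      rw [dotProduct_smul, smul_eq_mul, psc, Matrix.dotProduct_mulVec, ← star_BHw]
  rw [hT1, hT2, hT3]

lemma Ds_re (i : Fin n) (hGi : (Gmat B x i).PosDef) (h : Fin n → Fin d → ℂ) :
    (Ds A B x i h).re = 2 * (asc A B x h i).re
      - 2 * ∑ j, (star (qsc A B x i j) * psc A B x h i j).re := by
  rw [Ds_eq i hGi h]
  have hstar : (star (asc A B x h i)).re = (asc A B x h i).re := Complex.conj_re _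
  have hterm : ∀ j, (star (psc A B x h i j) * qsc A B x i j).re
      = (star (qsc A B x i j) * psc A B x h i j).re := by
    intro j
    rw [show star (psc A B x h i j) * qsc A B x i j
        = star (star (qsc A B x i j) * psc A B x h i j) by
      rw [StarMul.star_mul, star_star]]
    exact Complex.conj_re _
  simp only [Complex.add_re, Complex.neg_re, Complex.re_sum, hstar]
  rw [Finset.sum_congr rfl fun j _ => hterm j]
  ring

lemma triple_mulVec' {a b : ℕ} (Bm : Matrix (Fin a) (Fin b) ℂ) (u v : Fin a → ℂ)
    (z : Fin b → ℂ) :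
    (Bmᴴ * vecMulVec u v * Bm) *ᵥ z = (v ⬝ᵥ (Bm *ᵥ z)) • (Bmᴴ *ᵥ u) := by
  have := triple_mulVec Bmᴴ u v z
  rwa [Matrix.conjTranspose_conjTranspose] at this

lemma yhat_eq (i : Fin n) (hGi : (Gmat B x i).PosDef)
    (Fmi : Matrix (Fin ℓ) (Fin ℓ) ℂ)
    (hFmi : Fmi = vecMulVec (A i *ᵥ x i) (star (A i *ᵥ x i)) + Gmat B x i) :
    Fmi⁻¹ *ᵥ (A i *ᵥ x i)
      = ((((1 + Mratio A B x i)⁻¹ : ℝ)) : ℂ) • wvec A B x i := by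
  have hnn := Mratio_nonneg A B x i hGi
  have hpos : (0:ℝ) < 1 + Mratio A B x i := by linarith
  have hvv : (vecMulVec (A i *ᵥ x i) (star (A i *ᵥ x i))).PosSemidef := by
    rw [vecMulVec_eq (Fin 1), ← Matrix.conjTranspose_replicateCol]
    exact Matrix.posSemidef_self_mul_conjTranspose _
  have hFpd : Fmi.PosDef := by
    rw [hFmi]; exact Matrix.PosDef.posSemidef_add hvv hGi
  have hGdet : IsUnit (Gmat B x i).det :=
    (Matrix.isUnit_iff_isUnit_det _).mp hGi.isUnit
  have hFdet : IsUnit Fmi.det := (Matrix.isUnit_iff_isUnit_det _).mp hFpd.isUnit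
  set α : ℂ := ((((1 + Mratio A B x i)⁻¹ : ℝ)) : ℂ) with hα
  have hGw : Gmat B x i *ᵥ wvec A B x i = A i *ᵥ x i := by
    rw [wvec, Matrix.mulVec_mulVec, Matrix.mul_nonsing_inv _ hGdet, Matrix.one_mulVec]
  have key : Fmi *ᵥ (α • wvec A B x i) = A i *ᵥ x i := by
    rw [hFmi, Matrix.mulVec_smul, Matrix.add_mulVec, vecMulVec_mulVec', hGw,
      show star (A i *ᵥ x i) ⬝ᵥ wvec A B x i = ((Mratio A B x i : ℝ) : ℂ) from
        s_eq_t i hGi,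
      smul_add, smul_smul, ← add_smul]
    have : α * ((Mratio A B x i : ℝ) : ℂ) + α = 1 := by
      rw [hα, ← Complex.ofReal_mul, ← Complex.ofReal_add, ← Complex.ofReal_one]
      congr 1
      field_simp
      ring
    rw [this, one_smul]
  calc Fmi⁻¹ *ᵥ (A i *ᵥ x i) = Fmi⁻¹ *ᵥ (Fmi *ᵥ (α • wvec A B x i)) := by rw [key]
    _ = (Fmi⁻¹ * Fmi) *ᵥ (α • wvec A B x i) := by rw [Matrix.mulVec_mulVec]
    _ = α • wvec A B x i := by
        rw [Matrix.nonsing_inv_mul _ hFdet, Matrix.one_mulVec]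

lemma vterm_eq (μ tv : Fin n → ℝ) (i : Fin n) (hG : ∀ k, (Gmat B x k).PosDef)
    (ht : ∀ k, tv k = Mratio A B x k)
    (yhat : Fin n → Fin ℓ → ℂ)
    (hy : ∀ k, yhat k = (((1 + tv k)⁻¹ : ℝ) : ℂ) • wvec A B x k)
    (Dhati : Matrix (Fin d) (Fin d) ℂ)
    (hDhati : Dhati = ((μ i * (1 + tv i) : ℝ) : ℂ) •
          ((A i)ᴴ * vecMulVec (yhat i) (star (yhat i)) * A i)
        + ∑ j, ((μ j * (1 + tv j) : ℝ) : ℂ) •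
            ((B j i)ᴴ * vecMulVec (yhat j) (star (yhat j)) * B j i)) :
    ((μ i * (1 + tv i) : ℝ) : ℂ) • ((A i)ᴴ *ᵥ yhat i) - Dhati *ᵥ x i
    = ((μ i * (1 + tv i)⁻¹ : ℝ) : ℂ) • ((A i)ᴴ *ᵥ wvec A B x i)
      - ∑ j, (((μ j * (1 + tv j)⁻¹ : ℝ) : ℂ) * qsc A B x j i) •
          ((B j i)ᴴ *ᵥ wvec A B x j) := by
  have h1t : ∀ k, (0:ℝ) < 1 + tv k := fun k => by
    have := Mratio_nonneg A B x k (hG k); rw [ht k]; linarith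
  have hne : ∀ k, ((1 + tv k : ℝ) : ℂ) ≠ 0 := fun k => by
    exact_mod_cast (h1t k).ne'
  have hdot : ∀ k (v : Fin ℓ → ℂ), star (yhat k) ⬝ᵥ v
      = (((1 + tv k)⁻¹ : ℝ) : ℂ) * (star (wvec A B x k) ⬝ᵥ v) := by
    intro k v
    rw [hy k, star_smul, smul_dotProduct, smul_eq_mul]
    congr 1
    exact Complex.conj_ofReal _
  have hmv : ∀ k (M : Matrix (Fin ℓ) (Fin d) ℂ), Mᴴ *ᵥ yhat k
      = (((1 + tv k)⁻¹ : ℝ) : ℂ) • (Mᴴ *ᵥ wvec A B x k) := fun k M => by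
    rw [hy k, Matrix.mulVec_smul]
  have hsum : ∑ j, ((((μ j * (1 + tv j) : ℝ) : ℂ) •
        ((B j i)ᴴ * vecMulVec (yhat j) (star (yhat j)) * B j i)) *ᵥ x i)
      = ∑ j, (((μ j * (1 + tv j)⁻¹ : ℝ) : ℂ) * qsc A B x j i) •
          ((B j i)ᴴ *ᵥ wvec A B x j) := by
    refine Finset.sum_congr rfl fun j _ => ?_
    rw [Matrix.smul_mulVec, triple_mulVec', hdot j, hmv j, qsc,
      smul_smul, smul_smul]
    congr 1
    have hq : star (wvec A B x j) ⬝ᵥ (B j i *ᵥ x i) = qsc A B x j i := rfl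
    have e : (1 + (tv j : ℂ)) * (1 + (tv j : ℂ))⁻¹ = 1 := by
      have := hne j; push_cast at this ⊢; exact mul_inv_cancel₀ this
    push_cast
    rw [hq]
    linear_combination (↑(μ j) * qsc A B x j i * (1 + (tv j : ℂ))⁻¹) * e
  rw [hDhati, Matrix.add_mulVec, Matrix.smul_mulVec, sum_mulVec', hsum,
    triple_mulVec', hdot i, hmv i, wshift i (hG i), ← ht i,
    smul_smul, smul_smul, smul_smul, sub_add_eq_sub_sub, ← sub_smul]
  congr 2
  have e : (1 + (tv i : ℂ)) * (1 + (tv i : ℂ))⁻¹ = 1 := by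
    have := hne i; push_cast at this ⊢; exact mul_inv_cancel₀ this
  push_cast
  linear_combination (-(↑(μ i) * ↑(tv i) * (1 + (tv i : ℂ))⁻¹)) * e

lemma sum_dotProduct' {a : ℕ} {κ : Type*} (s : Finset κ) (f : κ → Fin a → ℂ)
    (v : Fin a → ℂ) : (∑ j ∈ s, f j) ⬝ᵥ v = ∑ j ∈ s, f j ⬝ᵥ v := by
  simp only [dotProduct, Finset.sum_apply, Finset.sum_mul]
  exact Finset.sum_comm

lemma key_sum (r a : Fin n → ℝ) (S : Fin n → Fin n → ℝ) :
    ∑ i, r i * (2 * a i - 2 * ∑ j, S i j)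
      = 2 * ∑ i, (r i * a i - ∑ j, r j * S j i) := by
  have h1 : ∑ i, r i * (2 * a i - 2 * ∑ j, S i j)
      = ∑ i, (2 * (r i * a i) - ∑ j, 2 * (r i * S i j)) := by
    refine Finset.sum_congr rfl fun i _ => ?_
    have h : ∑ j, 2 * (r i * S i j) = 2 * (r i * ∑ j, S i j) := by
      rw [Finset.mul_sum, Finset.mul_sum]
    rw [h]; ring
  rw [h1, Finset.sum_sub_distrib]
  have h2 : ∑ i, ∑ j, 2 * (r i * S i j) = ∑ j, ∑ i, 2 * (r i * S i j) :=
    Finset.sum_comm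
  rw [h2, Finset.mul_sum, ← Finset.sum_sub_distrib]
  refine Finset.sum_congr rfl fun i _ => ?_
  rw [mul_sub, Finset.mul_sum]

end Point

end Cor1


/-- **Corollary 1**: with `tᵢ = Mᵢ(x)`, `Fᵢ(x) = Aᵢ xᵢ xᵢᴴ Aᵢᴴ + Gᵢ(x)`,
`ŷᵢ = Fᵢ(x)⁻¹ Aᵢ xᵢ`, and
`D̂ᵢ = μᵢ(1 + tᵢ) Aᵢᴴ ŷᵢ ŷᵢᴴ Aᵢ + ∑ⱼ μⱼ(1 + tⱼ) Bⱼᵢᴴ ŷⱼ ŷⱼᴴ Bⱼᵢ`,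
the objective `g_o` is ℝ-differentiable at `x` with ℝ-Fréchet derivative in
direction `h` equal to `2 ∑ᵢ Re{(μᵢ(1 + tᵢ) Aᵢᴴ ŷᵢ − D̂ᵢ xᵢ)ᴴ hᵢ}`. -/
theorem go_hasFDerivAt {n d ℓ : ℕ} (μ : Fin n → ℝ) (hμ : ∀ i, 0 < μ i)
    (A : Fin n → Matrix (Fin ℓ) (Fin d) ℂ)
    (B : Fin n → Fin n → Matrix (Fin ℓ) (Fin d) ℂ)
    (x : Fin n → Fin d → ℂ) (hG : ∀ i, (Gmat B x i).PosDef)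
    (t : Fin n → ℝ) (ht : ∀ i, t i = Mratio A B x i)
    (Fm : Fin n → Matrix (Fin ℓ) (Fin ℓ) ℂ)
    (hFm : ∀ i, Fm i =
      vecMulVec (A i *ᵥ x i) (star (A i *ᵥ x i)) + Gmat B x i)
    (yhat : Fin n → Fin ℓ → ℂ)
    (hyhat : ∀ i, yhat i = (Fm i)⁻¹ *ᵥ (A i *ᵥ x i))
    (Dhat : Fin n → Matrix (Fin d) (Fin d) ℂ)
    (hDhat : ∀ i, Dhat i =
      ((μ i * (1 + t i) : ℝ) : ℂ) •
          ((A i)ᴴ * vecMulVec (yhat i) (star (yhat i)) * A i)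
        + ∑ j, ((μ j * (1 + t j) : ℝ) : ℂ) •
            ((B j i)ᴴ * vecMulVec (yhat j) (star (yhat j)) * B j i)) :
    ∃ L : (Fin n → Fin d → ℂ) →L[ℝ] ℝ,
      HasFDerivAt (go μ A B) L x ∧
      ∀ h : Fin n → Fin d → ℂ,
        L h = 2 * ∑ i,
          (star (((μ i * (1 + t i) : ℝ) : ℂ) • ((A i)ᴴ *ᵥ yhat i)
            - Dhat i *ᵥ x i) ⬝ᵥ h i).re := by
  classical
  refine ⟨_, Cor1.hasFDerivAt_go μ A B x hG, fun h => ?_⟩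
  have hy : ∀ k, yhat k = (((1 + t k)⁻¹ : ℝ) : ℂ) • Cor1.wvec A B x k := by
    intro k
    rw [hyhat k, Cor1.yhat_eq k (hG k) (Fm k) (hFm k), ht k]
  -- expand the left-hand side
  have hL : (∑ i, (μ i * (1 + Mratio A B x i)⁻¹) •
        (Complex.reCLM ∘L Cor1.Ds A B x i)) h
      = ∑ i, (μ i * (1 + t i)⁻¹) *
          (2 * (Cor1.asc A B x h i).re
            - 2 * ∑ j, (star (Cor1.qsc A B x i j) * Cor1.psc A B x h i j).re) := by
    rw [ContinuousLinearMap.sum_apply]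
    refine Finset.sum_congr rfl fun i _ => ?_
    rw [ContinuousLinearMap.smul_apply, ContinuousLinearMap.comp_apply, ← ht i,
      smul_eq_mul]
    congr 1
    exact Cor1.Ds_re i (hG i) h
  -- expand the right-hand side summands
  have hR : ∀ i, (star (((μ i * (1 + t i) : ℝ) : ℂ) • ((A i)ᴴ *ᵥ yhat i)
      - Dhat i *ᵥ x i) ⬝ᵥ h i).re
      = (μ i * (1 + t i)⁻¹) * (Cor1.asc A B x h i).re
        - ∑ j, (μ j * (1 + t j)⁻¹) *
            (star (Cor1.qsc A B x j i) * Cor1.psc A B x h j i).re := by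
    intro i
    rw [Cor1.vterm_eq μ t i hG ht yhat hy (Dhat i) (hDhat i)]
    rw [star_sub, sub_dotProduct]
    have e1 : star (((μ i * (1 + t i)⁻¹ : ℝ) : ℂ) • ((A i)ᴴ *ᵥ Cor1.wvec A B x i)) ⬝ᵥ h i
        = ((μ i * (1 + t i)⁻¹ : ℝ) : ℂ) * Cor1.asc A B x h i := by
      rw [star_smul, smul_dotProduct, smul_eq_mul]
      congr 1
      exact Complex.conj_ofReal _
    have e2 : star (∑ j, (((μ j * (1 + t j)⁻¹ : ℝ) : ℂ) * Cor1.qsc A B x j i) •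
          ((B j i)ᴴ *ᵥ Cor1.wvec A B x j)) ⬝ᵥ h i
        = ∑ j, ((μ j * (1 + t j)⁻¹ : ℝ) : ℂ) *
            (star (Cor1.qsc A B x j i) * Cor1.psc A B x h j i) := by
      rw [star_sum, Cor1.sum_dotProduct']
      refine Finset.sum_congr rfl fun j _ => ?_
      rw [star_smul, smul_dotProduct, smul_eq_mul, StarMul.star_mul]
      have : star (((μ j * (1 + t j)⁻¹ : ℝ) : ℂ)) = ((μ j * (1 + t j)⁻¹ : ℝ) : ℂ) :=
        Complex.conj_ofReal _
      rw [this]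
      ring_nf
      rfl
    rw [e1, e2, Complex.sub_re, Complex.re_ofReal_mul, Complex.re_sum]
    congr 1
    refine Finset.sum_congr rfl fun j _ => ?_
    exact Complex.re_ofReal_mul _ _
  rw [hL]
  rw [Finset.sum_congr rfl fun i _ => hR i]
  exact Cor1.key_sum _ _ _
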